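/- Let H be a finite-dimensional Hopf algebra with bijective antipode and V, W finite-dimensional vector spaces. The map R': Hom(V,W) ⊗ H → Hom(V ⊗ H, W ⊗ H), R'(f ⊗ h)(v ⊗ t) = f(v) ⊗ th, is an injective H*-module map, where H* acts on the right on H-factors via t ↽' α = ⟨α, S⁻¹(t₂)⟩ t₁, on Hom(V⊗H, W⊗H) via (T·α)(m) = (T(m·S⁻¹(α₂)))·α₁, and moreover R' is an algebra homomorphism End(V) ⊗ H^op → End(V ⊗ H) when V = W. -/

import Mathlib

open TensorProduct

/-- The right action `↽'` of `H*` on `H`: `t ↽' α = ⟨α, S⁻¹(t₂)⟩ t₁`. -/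
noncomputable def rAct {k H : Type*} [CommSemiring k] [Semiring H] [HopfAlgebra k H]
    (Sinv : H →ₗ[k] H) (α : Module.Dual k H) : H →ₗ[k] H :=
  (TensorProduct.rid k H).toLinearMap ∘ₗ
    (TensorProduct.map LinearMap.id (α ∘ₗ Sinv)) ∘ₗ (Coalgebra.comul (R := k))

/-- The map `R' : Hom(V,W) ⊗ H → Hom(V ⊗ H, W ⊗ H)`, `R'(f ⊗ h)(v ⊗ t) = f(v) ⊗ th`. -/
noncomputable def Rmap (k H : Type*) [CommSemiring k] [Semiring H] [Algebra k H]
    (V W : Type*) [AddCommMonoid V] [Module k V] [AddCommMonoid W] [Module k W] :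
    (V →ₗ[k] W) ⊗[k] H →ₗ[k] (V ⊗[k] H →ₗ[k] W ⊗[k] H) :=
  TensorProduct.homTensorHomMap (RingHom.id k) V H W H ∘ₗ
    LinearMap.lTensor (V →ₗ[k] W) ((LinearMap.mul k H).flip)

open Coalgebra

section aux
variable {k H : Type*} [CommSemiring k] [Semiring H] [HopfAlgebra k H]

local notation "𝒮" => (HopfAlgebra.antipode (R := k) (A := H) : H →ₗ[k] H)

noncomputable def Coalgebra.Repr.mul' {ι κ : Type*} {a b : H} (ra : Repr k a ι) (rb : Repr k b κ) :
    Repr k (a * b) (ι × κ) where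
  index := ra.index ×ˢ rb.index
  left := fun p => ra.left p.1 * rb.left p.2
  right := fun p => ra.right p.1 * rb.right p.2
  eq := by
    rw [Finset.sum_product]
    rw [show CoalgebraStruct.comul (R := k) (a * b) = comul (R := k) a * comul (R := k) b from
      Bialgebra.comul_mul a b, ← ra.eq, ← rb.eq, Finset.sum_mul_sum]
    simp [Algebra.TensorProduct.tmul_mul_tmul]

lemma sum_smul_counit_left {ι : Type*} {a : H} (rep : Repr k a ι) :
    ∑ i ∈ rep.index, counit (R := k) (rep.right i) • rep.left i = a := by
  have h := congrArg (TensorProduct.rid k H) (sum_tmul_counit_eq (R := k) rep)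
  rw [map_sum] at h
  simpa using h

lemma sum_counit_smul_right {ι : Type*} {a : H} (rep : Repr k a ι) :
    ∑ i ∈ rep.index, counit (R := k) (rep.left i) • rep.right i = a := by
  have h := congrArg (TensorProduct.lid k H) (sum_counit_tmul_eq (R := k) rep)
  rw [map_sum] at h
  simpa using h

lemma L1 {ι : Type*} {x : H} (rep : Repr k x ι) (C : H) :
    ∑ q ∈ rep.index, rep.left q * (𝒮 (rep.right q) * C) = counit (R := k) x • C := by
  calc ∑ q ∈ rep.index, rep.left q * (𝒮 (rep.right q) * C)
      = (∑ q ∈ rep.index, rep.left q * 𝒮 (rep.right q)) * C := by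
        rw [Finset.sum_mul]; simp [mul_assoc]
    _ = _ := by rw [HopfAlgebra.sum_mul_antipode_eq_smul rep, smul_mul_assoc, one_mul]

lemma L1' {ι : Type*} {x : H} (rep : Repr k x ι) (C : H) :
    ∑ q ∈ rep.index, 𝒮 (rep.left q) * (rep.right q * C) = counit (R := k) x • C := by
  calc ∑ q ∈ rep.index, 𝒮 (rep.left q) * (rep.right q * C)
      = (∑ q ∈ rep.index, 𝒮 (rep.left q) * rep.right q) * C := by
        rw [Finset.sum_mul]; simp [mul_assoc]
    _ = _ := by rw [HopfAlgebra.sum_antipode_mul_eq_smul rep, smul_mul_assoc, one_mul]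


lemma sum_swap4 {M : Type*} [AddCommMonoid M] {i1 i2 : Type*} {k1 : i1 → Type*}
    {k2 : i2 → Type*} (s : Finset i1) (t : Finset i2) (u : (i : i1) → Finset (k1 i))
    (v : (j : i2) → Finset (k2 j)) (F : (i : i1) → (j : i2) → k1 i → k2 j → M) :
    (∑ i ∈ s, ∑ j ∈ t, ∑ p ∈ u i, ∑ q ∈ v j, F i j p q)
    = ∑ j ∈ t, ∑ q ∈ v j, ∑ i ∈ s, ∑ p ∈ u i, F i j p q := by
  rw [Finset.sum_comm]
  refine Finset.sum_congr rfl fun j _ => ?_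
  calc (∑ i ∈ s, ∑ p ∈ u i, ∑ q ∈ v j, F i j p q)
      = ∑ i ∈ s, ∑ q ∈ v j, ∑ p ∈ u i, F i j p q :=
        Finset.sum_congr rfl fun i _ => Finset.sum_comm
    _ = _ := Finset.sum_comm

lemma antipode_mul' (a b : H) :
    (HopfAlgebra.antipode (R := k)) (a * b)
      = (HopfAlgebra.antipode (R := k) (A := H)) b * (HopfAlgebra.antipode (R := k)) a := by
  classical
  let μ3 : H ⊗[k] (H ⊗[k] H) →ₗ[k] H :=
    LinearMap.mul' k H ∘ₗ LinearMap.lTensor H (LinearMap.mul' k H)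
  have μ3_tmul : ∀ x y z : H, μ3 (x ⊗ₜ[k] (y ⊗ₜ[k] z)) = x * (y * z) := by
    intro x y z; simp [μ3]
  let ra := ℛ k a
  let rb := ℛ k b
  let aR : (i : H × H) → Repr k (ra.right i) (H × H) := fun i => ℛ k (ra.right i)
  let aL : (i : H × H) → Repr k (ra.left i) (H × H) := fun i => ℛ k (ra.left i)
  let bR : (j : H × H) → Repr k (rb.right j) (H × H) := fun j => ℛ k (rb.right j)
  let bL : (j : H × H) → Repr k (rb.left j) (H × H) := fun j => ℛ k (rb.left j)
  have pivA : ∀ B1 B2 B3 : H,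
      (∑ i ∈ ra.index, ∑ p ∈ (aR i).index,
        𝒮 (ra.left i * B1) * ((aR i).left p * (B2 * (B3 * 𝒮 ((aR i).right p)))))
      = ∑ i ∈ ra.index, ∑ p ∈ (aL i).index,
        𝒮 ((aL i).left p * B1) * ((aL i).right p * (B2 * (B3 * 𝒮 (ra.right i)))) := by
    intro B1 B2 B3
    have h := Coalgebra.sum_map_tmul_tmul_eq
      (f := 𝒮 ∘ₗ LinearMap.mulRight k B1)
      (g := LinearMap.id (R := k) (M := H))
      (h := LinearMap.mulLeft k B2 ∘ₗ LinearMap.mulLeft k B3 ∘ₗ 𝒮)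
      a (repr := ra) (a₁ := aL) (a₂ := aR)
    have h2 := congrArg μ3 h
    simpa [map_sum, μ3_tmul] using h2
  have pivB : ∀ A1 A2 A3 : H,
      (∑ j ∈ rb.index, ∑ q ∈ (bR j).index,
        𝒮 (A1 * rb.left j) * (A2 * ((bR j).left q * (𝒮 ((bR j).right q) * A3))))
      = ∑ j ∈ rb.index, ∑ q ∈ (bL j).index,
        𝒮 (A1 * (bL j).left q) * (A2 * ((bL j).right q * (𝒮 (rb.right j) * A3))) := by
    intro A1 A2 A3
    have h := Coalgebra.sum_map_tmul_tmul_eq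
      (f := 𝒮 ∘ₗ LinearMap.mulLeft k A1)
      (g := LinearMap.mulLeft k A2)
      (h := LinearMap.mulRight k A3 ∘ₗ 𝒮)
      b (repr := rb) (a₁ := bL) (a₂ := bR)
    have h2 := congrArg μ3 h
    simpa [map_sum, μ3_tmul, mul_assoc] using h2
  -- step 1 : S(a*b) = E1
  have e1 : 𝒮 (a * b)
      = ∑ i ∈ ra.index, ∑ j ∈ rb.index, ∑ p ∈ (aR i).index, ∑ q ∈ (bR j).index,
          𝒮 (ra.left i * rb.left j) *
            ((aR i).left p * ((bR j).left q * (𝒮 ((bR j).right q) * 𝒮 ((aR i).right p)))) := by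
    have expandA : 𝒮 (a * b)
        = ∑ i ∈ ra.index, ∑ j ∈ rb.index,
            counit (R := k) (ra.right i) • counit (R := k) (rb.right j) •
              𝒮 (ra.left i * rb.left j) := by
      conv_lhs => rw [show a = ∑ i ∈ ra.index, counit (R := k) (ra.right i) • ra.left i from
          (sum_smul_counit_left ra).symm,
        show b = ∑ j ∈ rb.index, counit (R := k) (rb.right j) • rb.left j from
          (sum_smul_counit_left rb).symm]
      rw [Finset.sum_mul_sum, map_sum]
      refine Finset.sum_congr rfl fun i _ => ?_
      rw [map_sum]
      refine Finset.sum_congr rfl fun j _ => ?_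
      rw [smul_mul_assoc, mul_smul_comm, map_smul, map_smul]
    rw [expandA]
    refine Finset.sum_congr rfl fun i _ => Finset.sum_congr rfl fun j _ => ?_
    rw [eq_comm]
    calc ∑ p ∈ (aR i).index, ∑ q ∈ (bR j).index,
          𝒮 (ra.left i * rb.left j) *
            ((aR i).left p * ((bR j).left q * (𝒮 ((bR j).right q) * 𝒮 ((aR i).right p))))
        = ∑ p ∈ (aR i).index,
            counit (R := k) (rb.right j) •
              (𝒮 (ra.left i * rb.left j) * ((aR i).left p * 𝒮 ((aR i).right p))) := by
          refine Finset.sum_congr rfl fun p _ => ?_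
          rw [← Finset.mul_sum, ← Finset.mul_sum, L1 (bR j) (𝒮 ((aR i).right p)),
            mul_smul_comm, mul_smul_comm]
      _ = counit (R := k) (rb.right j) •
            (𝒮 (ra.left i * rb.left j) * (counit (R := k) (ra.right i) • (1 : H))) := by
          rw [← Finset.smul_sum, ← Finset.mul_sum,
            HopfAlgebra.sum_mul_antipode_eq_smul (aR i)]
      _ = counit (R := k) (ra.right i) • counit (R := k) (rb.right j) •
            𝒮 (ra.left i * rb.left j) := by
          rw [mul_smul_comm, mul_one, smul_comm]
  -- step 2 : reorder, pivot a, reorder, pivot b, reorder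
  have e2 : (∑ i ∈ ra.index, ∑ j ∈ rb.index, ∑ p ∈ (aR i).index, ∑ q ∈ (bR j).index,
          𝒮 (ra.left i * rb.left j) *
            ((aR i).left p * ((bR j).left q * (𝒮 ((bR j).right q) * 𝒮 ((aR i).right p)))))
      = ∑ i ∈ ra.index, ∑ j ∈ rb.index, ∑ p ∈ (aL i).index, ∑ q ∈ (bL j).index,
          𝒮 ((aL i).left p * (bL j).left q) *
            ((aL i).right p * ((bL j).right q * (𝒮 (rb.right j) * 𝒮 (ra.right i)))) := by
    calc (∑ i ∈ ra.index, ∑ j ∈ rb.index, ∑ p ∈ (aR i).index, ∑ q ∈ (bR j).index,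
          𝒮 (ra.left i * rb.left j) *
            ((aR i).left p * ((bR j).left q * (𝒮 ((bR j).right q) * 𝒮 ((aR i).right p)))))
        = ∑ j ∈ rb.index, ∑ q ∈ (bR j).index, ∑ i ∈ ra.index, ∑ p ∈ (aR i).index,
            𝒮 (ra.left i * rb.left j) *
              ((aR i).left p * ((bR j).left q * (𝒮 ((bR j).right q) * 𝒮 ((aR i).right p)))) := by
          exact sum_swap4 ra.index rb.index (fun i => (aR i).index)
            (fun j => (bR j).index) (fun i j p q =>
              𝒮 (ra.left i * rb.left j) *
                ((aR i).left p * ((bR j).left q * (𝒮 ((bR j).right q) * 𝒮 ((aR i).right p)))))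
      _ = ∑ j ∈ rb.index, ∑ q ∈ (bR j).index, ∑ i ∈ ra.index, ∑ p ∈ (aL i).index,
            𝒮 ((aL i).left p * rb.left j) *
              ((aL i).right p * ((bR j).left q * (𝒮 ((bR j).right q) * 𝒮 (ra.right i)))) := by
          exact Finset.sum_congr rfl fun j _ => Finset.sum_congr rfl fun q _ =>
            pivA (rb.left j) ((bR j).left q) (𝒮 ((bR j).right q))
      _ = ∑ i ∈ ra.index, ∑ j ∈ rb.index, ∑ p ∈ (aL i).index, ∑ q ∈ (bR j).index,
            𝒮 ((aL i).left p * rb.left j) *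
              ((aL i).right p * ((bR j).left q * (𝒮 ((bR j).right q) * 𝒮 (ra.right i)))) := by
          exact (sum_swap4 ra.index rb.index (fun i => (aL i).index)
            (fun j => (bR j).index) (fun i j p q =>
              𝒮 ((aL i).left p * rb.left j) *
                ((aL i).right p * ((bR j).left q * (𝒮 ((bR j).right q) * 𝒮 (ra.right i)))))).symm
      _ = ∑ i ∈ ra.index, ∑ p ∈ (aL i).index, ∑ j ∈ rb.index, ∑ q ∈ (bR j).index,
            𝒮 ((aL i).left p * rb.left j) *
              ((aL i).right p * ((bR j).left q * (𝒮 ((bR j).right q) * 𝒮 (ra.right i)))) := by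
          exact Finset.sum_congr rfl fun i _ => Finset.sum_comm
      _ = ∑ i ∈ ra.index, ∑ p ∈ (aL i).index, ∑ j ∈ rb.index, ∑ q ∈ (bL j).index,
            𝒮 ((aL i).left p * (bL j).left q) *
              ((aL i).right p * ((bL j).right q * (𝒮 (rb.right j) * 𝒮 (ra.right i)))) := by
          exact Finset.sum_congr rfl fun i _ => Finset.sum_congr rfl fun p _ =>
            pivB ((aL i).left p) ((aL i).right p) (𝒮 (ra.right i))
      _ = ∑ i ∈ ra.index, ∑ j ∈ rb.index, ∑ p ∈ (aL i).index, ∑ q ∈ (bL j).index,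
            𝒮 ((aL i).left p * (bL j).left q) *
              ((aL i).right p * ((bL j).right q * (𝒮 (rb.right j) * 𝒮 (ra.right i)))) := by
          exact Finset.sum_congr rfl fun i _ => Finset.sum_comm
  -- step 3 : E2 = S b * S a
  have e3 : (∑ i ∈ ra.index, ∑ j ∈ rb.index, ∑ p ∈ (aL i).index, ∑ q ∈ (bL j).index,
          𝒮 ((aL i).left p * (bL j).left q) *
            ((aL i).right p * ((bL j).right q * (𝒮 (rb.right j) * 𝒮 (ra.right i)))))
      = (HopfAlgebra.antipode (R := k) (A := H)) b * (HopfAlgebra.antipode (R := k)) a := by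
    have expandB : (HopfAlgebra.antipode (R := k) (A := H)) b *
          (HopfAlgebra.antipode (R := k)) a
        = ∑ i ∈ ra.index, ∑ j ∈ rb.index,
            counit (R := k) (ra.left i) • counit (R := k) (rb.left j) •
              (𝒮 (rb.right j) * 𝒮 (ra.right i)) := by
      conv_lhs => rw [show a = ∑ i ∈ ra.index, counit (R := k) (ra.left i) • ra.right i from
          (sum_counit_smul_right ra).symm,
        show b = ∑ j ∈ rb.index, counit (R := k) (rb.left j) • rb.right j from
          (sum_counit_smul_right rb).symm]
      rw [map_sum, map_sum, Finset.sum_mul_sum, Finset.sum_comm]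
      refine Finset.sum_congr rfl fun i _ => Finset.sum_congr rfl fun j _ => ?_
      rw [map_smul, map_smul, smul_mul_assoc, mul_smul_comm, smul_comm]
    rw [expandB]
    refine Finset.sum_congr rfl fun i _ => Finset.sum_congr rfl fun j _ => ?_
    have h := L1' (Coalgebra.Repr.mul' (aL i) (bL j)) (𝒮 (rb.right j) * 𝒮 (ra.right i))
    simp only [Coalgebra.Repr.mul'] at h
    rw [Finset.sum_product] at h
    calc ∑ p ∈ (aL i).index, ∑ q ∈ (bL j).index,
          𝒮 ((aL i).left p * (bL j).left q) *
            ((aL i).right p * ((bL j).right q * (𝒮 (rb.right j) * 𝒮 (ra.right i))))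
        = counit (R := k) (ra.left i * rb.left j) • (𝒮 (rb.right j) * 𝒮 (ra.right i)) := by
          rw [← h]
          exact Finset.sum_congr rfl fun p _ => Finset.sum_congr rfl fun q _ => by
            simp [Coalgebra.Repr.mul', mul_assoc]
      _ = counit (R := k) (ra.left i) • counit (R := k) (rb.left j) •
            (𝒮 (rb.right j) * 𝒮 (ra.right i)) := by
          rw [Bialgebra.counit_mul, mul_smul]
  rw [e1, e2, e3]


lemma antipode_one' : (HopfAlgebra.antipode (R := k) (A := H)) 1 = 1 := by
  have := HopfAlgebra.mul_antipode_rTensor_comul_apply (R := k) (A := H) 1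
  simpa [Bialgebra.comul_one, Algebra.TensorProduct.one_def] using this

variable (Sinv : H →ₗ[k] H)
  (hS1 : ∀ x, Sinv ((HopfAlgebra.antipode (R := k) : H →ₗ[k] H) x) = x)
  (hS2 : ∀ x, (HopfAlgebra.antipode (R := k) : H →ₗ[k] H) (Sinv x) = x)

include hS1 in
lemma Sinv_one : Sinv 1 = 1 := by
  conv_lhs => rw [← antipode_one' (k := k) (H := H)]
  rw [hS1]

include hS1 hS2 in
lemma Sinv_mul (a b : H) : Sinv (a * b) = Sinv b * Sinv a := by
  have : a * b = 𝒮 (Sinv b * Sinv a) := by rw [antipode_mul', hS2, hS2]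
  rw [this, hS1]

include hS1 hS2 in
lemma sinv_axiom {ι : Type*} {x : H} (rep : Repr k x ι) :
    ∑ i ∈ rep.index, Sinv (rep.right i) * rep.left i = counit (R := k) x • (1 : H) := by
  have inj : Function.Injective 𝒮 := fun u v huv => by rw [← hS1 u, huv, hS1]
  apply inj
  rw [map_sum, map_smul, antipode_one']
  calc ∑ i ∈ rep.index, 𝒮 (Sinv (rep.right i) * rep.left i)
      = ∑ i ∈ rep.index, 𝒮 (rep.left i) * rep.right i := by
        refine Finset.sum_congr rfl fun i _ => ?_
        rw [antipode_mul', hS2]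
    _ = counit (R := k) x • (1 : H) := HopfAlgebra.sum_antipode_mul_eq_smul rep

include hS1 hS2 in
lemma claimC (t : H) :
    ∑ i ∈ (ℛ k t).index, ∑ j ∈ (ℛ k ((ℛ k t).left i)).index,
        (ℛ k ((ℛ k t).left i)).left j ⊗ₜ[k]
          (Sinv ((ℛ k t).right i) * (ℛ k ((ℛ k t).left i)).right j)
      = t ⊗ₜ[k] (1 : H) := by
  classical
  let r := ℛ k t
  let rL : (i : H × H) → Repr k (r.left i) (H × H) := fun i => ℛ k (r.left i)
  let rR : (i : H × H) → Repr k (r.right i) (H × H) := fun i => ℛ k (r.right i)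
  let g' : H ⊗[k] H →ₗ[k] H :=
    LinearMap.mul' k H ∘ₗ TensorProduct.map Sinv LinearMap.id ∘ₗ
      (TensorProduct.comm k H H).toLinearMap
  have g'_tmul : ∀ x y : H, g' (x ⊗ₜ[k] y) = Sinv y * x := by intro x y; simp [g']
  have h0 := Coalgebra.sum_tmul_tmul_eq (R := k) r rL rR
  have h1 := congrArg (LinearMap.lTensor H g') h0
  rw [map_sum, map_sum] at h1
  simp only [map_sum, LinearMap.lTensor_tmul, g'_tmul] at h1
  calc (∑ i ∈ (ℛ k t).index, ∑ j ∈ (ℛ k ((ℛ k t).left i)).index,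
        (ℛ k ((ℛ k t).left i)).left j ⊗ₜ[k]
          (Sinv ((ℛ k t).right i) * (ℛ k ((ℛ k t).left i)).right j))
      = ∑ i ∈ r.index, ∑ j ∈ (rR i).index,
          r.left i ⊗ₜ[k] (Sinv ((rR i).right j) * (rR i).left j) := h1
    _ = ∑ i ∈ r.index, r.left i ⊗ₜ[k] (counit (R := k) (r.right i) • (1 : H)) := by
        refine Finset.sum_congr rfl fun i _ => ?_
        rw [← TensorProduct.tmul_sum, sinv_axiom Sinv hS1 hS2 (rR i)]
    _ = (∑ i ∈ r.index, counit (R := k) (r.right i) • r.left i) ⊗ₜ[k] (1 : H) := by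
        rw [TensorProduct.sum_tmul]
        exact Finset.sum_congr rfl fun i _ => by
          rw [TensorProduct.tmul_smul, TensorProduct.smul_tmul']
    _ = t ⊗ₜ[k] (1 : H) := by rw [sum_smul_counit_left r]


lemma rAct_repr (β : Module.Dual k H) {ι : Type*} {x : H} (rep : Repr k x ι) :
    rAct Sinv β x = ∑ i ∈ rep.index, β (Sinv (rep.right i)) • rep.left i := by
  rw [rAct, LinearMap.comp_apply, LinearMap.comp_apply,
    show (Coalgebra.comul (R := k)) x = ∑ i ∈ rep.index, rep.left i ⊗ₜ[k] rep.right i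
      from rep.eq.symm, map_sum, map_sum]
  simp

include hS1 hS2 in
lemma key_identity (α : Module.Dual k H) (ι : Type) [Fintype ι]
    (αA αB : ι → Module.Dual k H)
    (hyp : ∀ x y : H, α (x * y) = ∑ i, αA i x * αB i y) (t h : H) :
    ∑ i, rAct Sinv (αA i) (rAct Sinv (αB i ∘ₗ Sinv) t * h) = t * rAct Sinv α h := by
  classical
  -- step 1+2: expand everything
  have step : ∀ i : ι, rAct Sinv (αA i) (rAct Sinv (αB i ∘ₗ Sinv) t * h)
      = ∑ i' ∈ (ℛ k t).index, ∑ j ∈ (ℛ k ((ℛ k t).left i')).index, ∑ l ∈ (ℛ k h).index,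
          (αB i (Sinv (Sinv ((ℛ k t).right i'))) *
            αA i (Sinv ((ℛ k ((ℛ k t).left i')).right j * (ℛ k h).right l))) •
            ((ℛ k ((ℛ k t).left i')).left j * (ℛ k h).left l) := by
    intro i
    rw [rAct_repr Sinv (αB i ∘ₗ Sinv) (ℛ k t), Finset.sum_mul, map_sum]
    refine Finset.sum_congr rfl fun i' _ => ?_
    rw [smul_mul_assoc, map_smul,
      rAct_repr Sinv (αA i) (Coalgebra.Repr.mul' (ℛ k ((ℛ k t).left i')) (ℛ k h))]
    simp only [Coalgebra.Repr.mul']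
    rw [Finset.sum_product, Finset.smul_sum]
    refine Finset.sum_congr rfl fun j _ => ?_
    rw [Finset.smul_sum]
    refine Finset.sum_congr rfl fun l _ => ?_
    rw [LinearMap.comp_apply, smul_smul]
  rw [Finset.sum_congr rfl fun i _ => step i]
  -- move the ι-sum innermost
  rw [Finset.sum_comm]
  rw [Finset.sum_congr rfl fun i' _ => Finset.sum_comm]
  rw [Finset.sum_congr rfl fun i' _ => Finset.sum_congr rfl fun j _ => Finset.sum_comm]
  -- combine the coefficients using the hypothesis
  have comb : ∀ i' ∈ (ℛ k t).index, ∀ j ∈ (ℛ k ((ℛ k t).left i')).index,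
      ∀ l ∈ (ℛ k h).index,
      (∑ i : ι, (αB i (Sinv (Sinv ((ℛ k t).right i'))) *
        αA i (Sinv ((ℛ k ((ℛ k t).left i')).right j * (ℛ k h).right l))) •
        ((ℛ k ((ℛ k t).left i')).left j * (ℛ k h).left l))
      = α (Sinv ((ℛ k h).right l) *
          Sinv (Sinv ((ℛ k t).right i') * (ℛ k ((ℛ k t).left i')).right j)) •
          ((ℛ k ((ℛ k t).left i')).left j * (ℛ k h).left l) := by
    intro i' _ j _ l _
    rw [← Finset.sum_smul]
    congr 1
    rw [Finset.sum_congr rfl fun i _ => mul_comm _ _, ← hyp]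
    rw [Sinv_mul Sinv hS1 hS2 _ _, mul_assoc, ← Sinv_mul Sinv hS1 hS2 _ _]
  rw [Finset.sum_congr rfl fun i' hi' => Finset.sum_congr rfl fun j hj =>
    Finset.sum_congr rfl fun l hl => comb i' hi' j hj l hl]
  -- move the l-sum outside
  rw [Finset.sum_congr rfl fun i' _ => Finset.sum_comm, Finset.sum_comm]
  -- apply claimC with the map Φ l
  have final : ∀ l ∈ (ℛ k h).index,
      (∑ i' ∈ (ℛ k t).index, ∑ j ∈ (ℛ k ((ℛ k t).left i')).index,
        α (Sinv ((ℛ k h).right l) *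
          Sinv (Sinv ((ℛ k t).right i') * (ℛ k ((ℛ k t).left i')).right j)) •
          ((ℛ k ((ℛ k t).left i')).left j * (ℛ k h).left l))
      = α (Sinv ((ℛ k h).right l)) • (t * (ℛ k h).left l) := by
    intro l _
    let Φ : H ⊗[k] H →ₗ[k] H :=
      LinearMap.mulRight k ((ℛ k h).left l) ∘ₗ (TensorProduct.rid k H).toLinearMap ∘ₗ
        TensorProduct.map LinearMap.id
          (α ∘ₗ LinearMap.mulLeft k (Sinv ((ℛ k h).right l)) ∘ₗ Sinv)
    have Φ_tmul : ∀ x y : H, Φ (x ⊗ₜ[k] y)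
        = α (Sinv ((ℛ k h).right l) * Sinv y) • (x * (ℛ k h).left l) := by
      intro x y; simp [Φ, smul_mul_assoc]
    have hC := congrArg Φ (claimC Sinv hS1 hS2 t)
    rw [map_sum] at hC
    simp only [map_sum, Φ_tmul] at hC
    rw [hC, Sinv_one Sinv hS1, mul_one]
  rw [Finset.sum_congr rfl final]
  -- compute the right-hand side
  rw [rAct_repr Sinv α (ℛ k h), Finset.mul_sum]
  exact Finset.sum_congr rfl fun l _ => (mul_smul_comm _ _ _).symm


lemma Rmap_tmul {V W : Type*} [AddCommMonoid V] [Module k V]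
    [AddCommMonoid W] [Module k W] (f : V →ₗ[k] W) (h : H) (v : V) (t : H) :
    Rmap k H V W (f ⊗ₜ[k] h) (v ⊗ₜ[k] t) = f v ⊗ₜ[k] (t * h) := by
  simp [Rmap]

end aux

theorem stmt11 {k H : Type*} [Field k] [Ring H] [HopfAlgebra k H] [FiniteDimensional k H]
    (Sinv : H →ₗ[k] H)
    (hS1 : ∀ x, Sinv ((HopfAlgebra.antipode (R := k) : H →ₗ[k] H) x) = x)
    (hS2 : ∀ x, (HopfAlgebra.antipode (R := k) : H →ₗ[k] H) (Sinv x) = x)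
    (V W : Type*) [AddCommGroup V] [Module k V] [FiniteDimensional k V]
    [AddCommGroup W] [Module k W] [FiniteDimensional k W] :
    -- `R'` is injective
    Function.Injective (Rmap k H V W) ∧
    -- `R'` is a map of right `H*`-modules
    (∀ (z : (V →ₗ[k] W) ⊗[k] H) (α : Module.Dual k H)
        (ι : Type) [Fintype ι] (αA αB : ι → Module.Dual k H),
      (∀ x y : H, α (x * y) = ∑ i, αA i x * αB i y) →
      ∀ m : V ⊗[k] H,
        ∑ i, (LinearMap.lTensor W (rAct Sinv (αA i)))
            ((Rmap k H V W z) ((LinearMap.lTensor V (rAct Sinv ((αB i) ∘ₗ Sinv))) m))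
          = (Rmap k H V W ((LinearMap.lTensor (V →ₗ[k] W) (rAct Sinv α)) z)) m) ∧
    -- when `V = W`, `R'` is an algebra map `End(V) ⊗ H^op → End(V ⊗ H)`
    (∀ (f g : V →ₗ[k] V) (h t : H),
      Rmap k H V V ((f ∘ₗ g) ⊗ₜ[k] (t * h))
        = Rmap k H V V (f ⊗ₜ[k] h) ∘ₗ Rmap k H V V (g ⊗ₜ[k] t)) ∧
    Rmap k H V V ((LinearMap.id : V →ₗ[k] V) ⊗ₜ[k] (1 : H)) = LinearMap.id := by
  refine ⟨?_, ?_, ?_, ?_⟩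
  · -- injectivity
    have h1 : Function.Injective ((LinearMap.mul k H).flip) := by
      intro x y hxy
      simpa using congrArg (fun φ : H →ₗ[k] H => φ 1) hxy
    have h2 : Function.Injective
        (LinearMap.lTensor (V →ₗ[k] W) ((LinearMap.mul k H).flip)) :=
      Module.Flat.lTensor_preserves_injective_linearMap _ h1
    have h3 : Function.Injective (TensorProduct.homTensorHomMap (RingHom.id k) V H W H) := by
      intro x y hxy
      apply (homTensorHomEquiv k V H W H).injective
      rw [homTensorHomEquiv_apply, homTensorHomEquiv_apply]
      exact hxy
    rw [Rmap, LinearMap.coe_comp]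
    exact h3.comp h2
  · -- module map
    intro z α ι _ αA αB hyp m
    induction z using TensorProduct.induction_on with
    | zero => simp
    | tmul f h =>
      induction m using TensorProduct.induction_on with
      | zero => simp
      | tmul v t =>
        have lt1 : ∀ i : ι, (LinearMap.lTensor V (rAct Sinv ((αB i) ∘ₗ Sinv)))
            (v ⊗ₜ[k] t) = v ⊗ₜ[k] rAct Sinv ((αB i) ∘ₗ Sinv) t := fun i => rfl
        calc ∑ i, (LinearMap.lTensor W (rAct Sinv (αA i)))
              ((Rmap k H V W (f ⊗ₜ[k] h))
                ((LinearMap.lTensor V (rAct Sinv ((αB i) ∘ₗ Sinv))) (v ⊗ₜ[k] t)))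
            = ∑ i, f v ⊗ₜ[k] rAct Sinv (αA i) (rAct Sinv ((αB i) ∘ₗ Sinv) t * h) := by
              refine Finset.sum_congr rfl fun i _ => ?_
              rw [lt1, Rmap_tmul, LinearMap.lTensor_tmul]
          _ = f v ⊗ₜ[k] (∑ i, rAct Sinv (αA i) (rAct Sinv ((αB i) ∘ₗ Sinv) t * h)) := by
              rw [TensorProduct.tmul_sum]
          _ = f v ⊗ₜ[k] (t * rAct Sinv α h) := by
              rw [key_identity Sinv hS1 hS2 α ι αA αB hyp t h]
          _ = (Rmap k H V W ((LinearMap.lTensor (V →ₗ[k] W) (rAct Sinv α))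
                (f ⊗ₜ[k] h))) (v ⊗ₜ[k] t) := by
              rw [LinearMap.lTensor_tmul, Rmap_tmul]
      | add m₁ m₂ hm₁ hm₂ =>
        simp only [map_add, LinearMap.add_apply] at *
        rw [← hm₁, ← hm₂, ← Finset.sum_add_distrib]
    | add z₁ z₂ hz₁ hz₂ =>
      simp only [map_add, LinearMap.add_apply] at *
      rw [← hz₁, ← hz₂, ← Finset.sum_add_distrib]
  · -- algebra map, multiplicativity
    intro f g h t
    apply TensorProduct.ext'
    intro v s
    rw [LinearMap.comp_apply, Rmap_tmul, Rmap_tmul, Rmap_tmul, LinearMap.comp_apply,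
      mul_assoc]
  · -- unit
    apply TensorProduct.ext'
    intro v t
    rw [Rmap_tmul, mul_one]
    rfl
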